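/- Let n ≥ 4 and let φ be a permutation of I = {1,…,n}. The Möbius n-pair 𝔐_{(n,φ)} admits a special decomposition if and only if n = 4 and φ is conjugate in S_4 to one of: the identity, the permutation (1 2)(3 4), or the permutation (1 2). Moreover, up to isomorphism the Möbius n-pairs with a special decomposition are exactly: 𝔐_{(4,id)}, which has 3 distinct special decompositions; 𝔐_{(4,(13)(24))}, which has exactly one special decomposition; and 𝔐_{(4,(12))}, which has exactly one special decomposition. -/

import Mathlib

abbrev MPoint (n : ℕ) := Fin n ⊕ Fin n

/-- The block `A_i = (A \ {a_i}) ∪ {b_i}`. -/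
def Ablock (n : ℕ) (i : Fin n) : Set (MPoint n) :=
  Sum.inl '' {j | j ≠ i} ∪ {Sum.inr i}

/-- The block `B_i = (B \ {b_i}) ∪ {a_{φ(i)}}`. -/
def Bblock (n : ℕ) (φ : Equiv.Perm (Fin n)) (i : Fin n) : Set (MPoint n) :=
  Sum.inr '' {j | j ≠ i} ∪ {Sum.inl (φ i)}

def ABlocks (n : ℕ) : Set (Set (MPoint n)) := Set.range (Ablock n)

def BBlocks (n : ℕ) (φ : Equiv.Perm (Fin n)) : Set (Set (MPoint n)) := Set.range (Bblock n φ)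

/-- The blocks of the Möbius `n`-pair `𝔐_{(n,φ)}`; its point set is all of `MPoint n`. -/
def MBlocks (n : ℕ) (φ : Equiv.Perm (Fin n)) : Set (Set (MPoint n)) :=
  ABlocks n ∪ BBlocks n φ

/-- A "simplex" of a decomposition: a pair (points, blocks). -/
abbrev MSimplex (n : ℕ) := Set (MPoint n) × Set (Set (MPoint n))

def SimplexA (n : ℕ) : MSimplex n := (Set.range Sum.inl, ABlocks n)

def SimplexB (n : ℕ) (φ : Equiv.Perm (Fin n)) : MSimplex n := (Set.range Sum.inr, BBlocks n φ)

/-- A decomposition of 𝔐_{(n,φ)} into two complementary mutually inscribed n-simplices. -/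
def IsDecomp (n : ℕ) (φ : Equiv.Perm (Fin n)) (S₁ S₂ : MSimplex n) : Prop :=
  S₁.1 ∪ S₂.1 = Set.univ ∧ Disjoint S₁.1 S₂.1 ∧ S₁.1.ncard = n ∧ S₂.1.ncard = n ∧
  S₁.2 ∪ S₂.2 = MBlocks n φ ∧ Disjoint S₁.2 S₂.2 ∧ S₁.2.ncard = n ∧ S₂.2.ncard = n ∧
  (∀ l ∈ S₁.2, (l ∩ S₁.1).ncard = n - 1 ∧ (l ∩ S₂.1).ncard = 1) ∧
  (∀ l ∈ S₂.2, (l ∩ S₂.1).ncard = n - 1 ∧ (l ∩ S₁.1).ncard = 1) ∧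
  (∀ p ∈ S₁.1, {l ∈ S₁.2 | p ∈ l}.ncard = n - 1 ∧ {l ∈ S₂.2 | p ∈ l}.ncard = 1) ∧
  (∀ p ∈ S₂.1, {l ∈ S₂.2 | p ∈ l}.ncard = n - 1 ∧ {l ∈ S₁.2 | p ∈ l}.ncard = 1)

/-- A special decomposition: one in which both simplices differ from S_A and S_B. -/
def IsSpecialDecomp (n : ℕ) (φ : Equiv.Perm (Fin n)) (S₁ S₂ : MSimplex n) : Prop :=
  IsDecomp n φ S₁ S₂ ∧
  S₁ ≠ SimplexA n ∧ S₁ ≠ SimplexB n φ ∧ S₂ ≠ SimplexA n ∧ S₂ ≠ SimplexB n φ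

/-!
Let `(P₁, L₁), (P₂, L₂)` be a decomposition and `X = {j | a_j ∈ P₁}`. A block `A_i ∈ L₁` has
exactly one point outside `P₁`, and all `a_j` with `j ≠ i` lie on it, so `|Xᶜ| ≤ 2`; a block
`A_i ∈ L₂` gives `|X| ≤ 2`, and the `B`-blocks bound `{j | b_j ∈ P₁}` in the same way. In a special
decomposition each `Lₜ` contains blocks of both kinds (a simplex containing every `A`-block is
`S_A`, and likewise for `B`), hence `n ≤ 4`. For `n = 4` the same counts leave no freedom:
`P₁ = {a_j | j ∈ X} ∪ {b_j | j ∉ X}` and `L₁ = {A_i | i ∉ X} ∪ {B_k | k ∈ X}` with `|X| = 2` and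
`φ X = X`, and conversely every such `X` yields a special decomposition. So the special
decompositions correspond to the `φ`-invariant splittings of `Fin 4` into two pairs, which are
counted by running through `S₄`.
-/

open Set Sum

namespace Set

variable {α β : Type*}

lemma ncard_eq_ncard_preimage_inl_add [Finite α] [Finite β] (s : Set (α ⊕ β)) :
    s.ncard = (inl ⁻¹' s).ncard + (inr ⁻¹' s).ncard := by
  conv_lhs => rw [← image_preimage_inl_union_image_preimage_inr s]
  rw [ncard_union_eq, ncard_image_of_injective _ inl_injective,
    ncard_image_of_injective _ inr_injective]
  exact disjoint_left.2 fun _ ⟨_, _, ha⟩ ⟨_, _, hb⟩ => by simp [← ha] at hb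

lemma ncard_singleton_inter_eq_ite (a : α) (s : Set α) [Decidable (a ∈ s)] :
    ({a} ∩ s).ncard = if a ∈ s then 1 else 0 := by
  split_ifs with h
  · rw [singleton_inter_of_mem h, ncard_singleton]
  · rw [singleton_inter_eq_empty.2 h, ncard_empty]

lemma ncard_compl_singleton_inter_eq_ite [Finite α] (a : α) (s : Set α) [Decidable (a ∈ s)] :
    ({a}ᶜ ∩ s).ncard = if a ∈ s then s.ncard - 1 else s.ncard := by
  rw [inter_comm, ← sdiff_eq]
  split_ifs with h
  · exact ncard_sdiff_singleton_of_mem h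
  · rw [sdiff_singleton_eq_self h]

lemma ncard_le_two_of_ncard_inter_add_eq_one [Finite α] {s t : Set α} {a b : α}
    (h : ({a}ᶜ ∩ s).ncard + ({b} ∩ t).ncard = 1) :
    s.ncard ≤ 2 ∧ (s.ncard = 2 → a ∈ s ∧ b ∉ t) := by
  classical
  rw [ncard_compl_singleton_inter_eq_ite, ncard_singleton_inter_eq_ite] at h
  refine ⟨by split_ifs at h <;> omega, fun hs => ?_⟩
  by_cases ha : a ∈ s
  · by_cases hb : b ∈ t
    · simp only [ha, hb, if_true] at h
      omega
    · exact ⟨ha, hb⟩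
  · simp only [ha, if_false] at h
    split_ifs at h <;> omega

end Set

lemma Fin.ncard_compl_singleton {n : ℕ} (i : Fin n) : ({i}ᶜ : Set (Fin n)).ncard = n - 1 := by
  rw [ncard_compl, ncard_singleton, Nat.card_fin]

section Blocks

variable {n : ℕ} {φ : Equiv.Perm (Fin n)}

@[simp] lemma mem_Ablock_inl {i j : Fin n} : (inl j : MPoint n) ∈ Ablock n i ↔ j ≠ i := by
  simp [Ablock]

@[simp] lemma mem_Ablock_inr {i j : Fin n} : (inr j : MPoint n) ∈ Ablock n i ↔ j = i := by
  simp [Ablock]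

@[simp] lemma mem_Bblock_inl {k j : Fin n} : (inl j : MPoint n) ∈ Bblock n φ k ↔ j = φ k := by
  simp [Bblock]

@[simp] lemma mem_Bblock_inr {k j : Fin n} : (inr j : MPoint n) ∈ Bblock n φ k ↔ j ≠ k := by
  simp [Bblock]

@[simp] lemma preimage_inl_Ablock (i : Fin n) : inl ⁻¹' Ablock n i = {i}ᶜ := by
  ext; simp

@[simp] lemma preimage_inr_Ablock (i : Fin n) : inr ⁻¹' Ablock n i = {i} := by
  ext; simp

@[simp] lemma preimage_inl_Bblock (k : Fin n) : inl ⁻¹' Bblock n φ k = {φ k} := by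
  ext; simp

@[simp] lemma preimage_inr_Bblock (k : Fin n) : inr ⁻¹' Bblock n φ k = {k}ᶜ := by
  ext; simp

lemma Ablock_injective : Function.Injective (Ablock n) := fun i j h => by
  simpa using congrArg (inr ⁻¹' ·) h

lemma Bblock_injective : Function.Injective (Bblock n φ) := fun i j h => by
  simpa using congrArg (inr ⁻¹' ·) h

lemma Ablock_ne_Bblock (hn : 3 ≤ n) (i k : Fin n) : Ablock n i ≠ Bblock n φ k := fun h => by
  have := congrArg (fun l => (inl ⁻¹' l).ncard) h
  simp only [preimage_inl_Ablock, preimage_inl_Bblock, Fin.ncard_compl_singleton,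
    ncard_singleton] at this
  omega

lemma ncard_ABlocks : (ABlocks n).ncard = n := by
  rw [ABlocks, ncard_range_of_injective Ablock_injective, Nat.card_fin]

lemma ncard_BBlocks : (BBlocks n φ).ncard = n := by
  rw [BBlocks, ncard_range_of_injective Bblock_injective, Nat.card_fin]

lemma sep_mem_inr_ABlocks (j : Fin n) : {l ∈ ABlocks n | inr j ∈ l} = {Ablock n j} := by
  ext l
  simp only [ABlocks, mem_range, mem_singleton_iff]
  constructor
  · rintro ⟨⟨i, rfl⟩, h⟩
    rw [mem_Ablock_inr.1 h]
  · rintro rfl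
    exact ⟨⟨j, rfl⟩, mem_Ablock_inr.2 rfl⟩

lemma sep_mem_inl_BBlocks (j : Fin n) :
    {l ∈ BBlocks n φ | inl j ∈ l} = {Bblock n φ (φ.symm j)} := by
  ext l
  simp only [BBlocks, mem_range, mem_singleton_iff]
  constructor
  · rintro ⟨⟨k, rfl⟩, h⟩
    rw [mem_Bblock_inl.1 h, Equiv.symm_apply_apply]
  · rintro rfl
    exact ⟨⟨_, rfl⟩, mem_Bblock_inl.2 (φ.apply_symm_apply j).symm⟩

lemma ncard_Ablock_inter (i : Fin n) (Q : Set (MPoint n)) :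
    (Ablock n i ∩ Q).ncard = ({i}ᶜ ∩ inl ⁻¹' Q).ncard + ({i} ∩ inr ⁻¹' Q).ncard := by
  rw [ncard_eq_ncard_preimage_inl_add, preimage_inter, preimage_inter, preimage_inl_Ablock,
    preimage_inr_Ablock]

lemma ncard_Bblock_inter (k : Fin n) (Q : Set (MPoint n)) :
    (Bblock n φ k ∩ Q).ncard = ({k}ᶜ ∩ inr ⁻¹' Q).ncard + ({φ k} ∩ inl ⁻¹' Q).ncard := by
  rw [ncard_eq_ncard_preimage_inl_add, preimage_inter, preimage_inter, preimage_inl_Bblock,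
    preimage_inr_Bblock, add_comm]

lemma ncard_image_Ablock_union_image_Bblock (hn : 3 ≤ n) (S T : Set (Fin n)) :
    (Ablock n '' S ∪ Bblock n φ '' T).ncard = S.ncard + T.ncard := by
  rw [ncard_union_eq, ncard_image_of_injective _ Ablock_injective,
    ncard_image_of_injective _ Bblock_injective]
  exact disjoint_left.2 fun _ ⟨i, _, hi⟩ ⟨k, _, hk⟩ => Ablock_ne_Bblock hn i k (hi.trans hk.symm)

lemma ncard_sep_mem_inl (hn : 3 ≤ n) (S T : Set (Fin n)) (j : Fin n) :
    {l ∈ Ablock n '' S ∪ Bblock n φ '' T | inl j ∈ l}.ncard =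
      ({j}ᶜ ∩ S).ncard + ({φ.symm j} ∩ T).ncard := by
  rw [← ncard_image_Ablock_union_image_Bblock hn]
  congr 1
  ext l
  simp only [mem_union, mem_image, mem_inter_iff, mem_compl_singleton_iff,
    mem_singleton_iff]
  constructor
  · rintro ⟨⟨i, hi, rfl⟩ | ⟨k, hk, rfl⟩, h⟩
    · exact Or.inl ⟨i, ⟨Ne.symm (mem_Ablock_inl.1 h), hi⟩, rfl⟩
    · exact Or.inr ⟨k, ⟨by simp [mem_Bblock_inl.1 h], hk⟩, rfl⟩
  · rintro (⟨i, ⟨hi, hS⟩, rfl⟩ | ⟨k, ⟨rfl, hT⟩, rfl⟩)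
    · exact ⟨Or.inl ⟨i, hS, rfl⟩, mem_Ablock_inl.2 (Ne.symm hi)⟩
    · exact ⟨Or.inr ⟨_, hT, rfl⟩, by simp⟩

lemma ncard_sep_mem_inr (hn : 3 ≤ n) (S T : Set (Fin n)) (j : Fin n) :
    {l ∈ Ablock n '' S ∪ Bblock n φ '' T | inr j ∈ l}.ncard =
      ({j} ∩ S).ncard + ({j}ᶜ ∩ T).ncard := by
  rw [← ncard_image_Ablock_union_image_Bblock hn]
  congr 1
  ext l
  simp only [mem_union, mem_image, mem_inter_iff, mem_compl_singleton_iff,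
    mem_singleton_iff]
  constructor
  · rintro ⟨⟨i, hi, rfl⟩ | ⟨k, hk, rfl⟩, h⟩
    · exact Or.inl ⟨i, ⟨(mem_Ablock_inr.1 h).symm, hi⟩, rfl⟩
    · exact Or.inr ⟨k, ⟨Ne.symm (mem_Bblock_inr.1 h), hk⟩, rfl⟩
  · rintro (⟨i, ⟨rfl, hS⟩, rfl⟩ | ⟨k, ⟨hk, hT⟩, rfl⟩)
    · exact ⟨Or.inl ⟨_, hS, rfl⟩, mem_Ablock_inr.2 rfl⟩
    · exact ⟨Or.inr ⟨k, hT, rfl⟩, mem_Bblock_inr.2 (Ne.symm hk)⟩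

end Blocks

section Decomposition

variable {n : ℕ} {φ : Equiv.Perm (Fin n)} {S₁ S₂ : MSimplex n}

lemma IsDecomp.symm (h : IsDecomp n φ S₁ S₂) : IsDecomp n φ S₂ S₁ := by
  obtain ⟨hP, hPd, hP₁, hP₂, hL, hLd, hL₁, hL₂, hl₁, hl₂, hp₁, hp₂⟩ := h
  exact ⟨by rwa [union_comm], hPd.symm, hP₂, hP₁, by rwa [union_comm], hLd.symm, hL₂, hL₁,
    hl₂, hl₁, hp₂, hp₁⟩

lemma IsSpecialDecomp.symm (h : IsSpecialDecomp n φ S₁ S₂) : IsSpecialDecomp n φ S₂ S₁ :=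
  let ⟨hd, hA₁, hB₁, hA₂, hB₂⟩ := h
  ⟨hd.symm, hA₂, hB₂, hA₁, hB₁⟩

lemma IsDecomp.snd_fst_eq_compl (h : IsDecomp n φ S₁ S₂) : S₂.1 = S₁.1ᶜ :=
  (IsCompl.compl_eq ⟨h.2.1, codisjoint_iff.2 h.1⟩).symm

lemma IsDecomp.fst_snd_subset (h : IsDecomp n φ S₁ S₂) : S₁.2 ⊆ MBlocks n φ :=
  h.2.2.2.2.1 ▸ subset_union_left

lemma IsDecomp.mem_snd_snd_iff (h : IsDecomp n φ S₁ S₂) {l : Set (MPoint n)}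
    (hl : l ∈ MBlocks n φ) : l ∈ S₂.2 ↔ l ∉ S₁.2 := by
  obtain ⟨-, -, -, -, hL, hLd, -⟩ := h
  rw [← hL] at hl
  exact ⟨fun h₂ h₁ => disjoint_left.1 hLd h₁ h₂, hl.resolve_left⟩

lemma IsDecomp.ncard_preimage_add (h : IsDecomp n φ S₁ S₂) (f : Fin n → MPoint n) :
    (f ⁻¹' S₁.1).ncard + (f ⁻¹' S₂.1).ncard = n := by
  rw [h.snd_fst_eq_compl, preimage_compl, ncard_add_ncard_compl, Nat.card_fin]

-- A simplex containing all `A`-blocks is `S_A`, because each `b_j` lies on only one `A`-block.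
lemma IsDecomp.eq_simplexA (hn : 3 ≤ n) (h : IsDecomp n φ S₁ S₂)
    (hA : ∀ i, Ablock n i ∈ S₁.2) : S₁ = SimplexA n := by
  obtain ⟨-, -, hP₁, -, -, -, hL₁, -, -, -, hp₁, -⟩ := h
  have hL : S₁.2 = ABlocks n :=
    (eq_of_subset_of_ncard_le (range_subset_iff.2 hA) (by rw [hL₁]; exact ncard_ABlocks.ge)).symm
  have hP : S₁.1 ⊆ range inl := by
    rintro (j | j) hj
    · exact mem_range_self j
    · have := (hp₁ _ hj).1
      rw [hL, sep_mem_inr_ABlocks, ncard_singleton] at this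
      omega
  refine Prod.ext (eq_of_subset_of_ncard_le hP ?_) hL
  rw [hP₁]
  exact ((ncard_range_of_injective inl_injective).trans (Nat.card_fin n)).le

lemma IsDecomp.eq_simplexB (hn : 3 ≤ n) (h : IsDecomp n φ S₁ S₂)
    (hB : ∀ k, Bblock n φ k ∈ S₁.2) : S₁ = SimplexB n φ := by
  obtain ⟨-, -, hP₁, -, -, -, hL₁, -, -, -, hp₁, -⟩ := h
  have hL : S₁.2 = BBlocks n φ :=
    (eq_of_subset_of_ncard_le (range_subset_iff.2 hB) (by rw [hL₁]; exact ncard_BBlocks.ge)).symm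
  have hP : S₁.1 ⊆ range inr := by
    rintro (j | j) hj
    · have := (hp₁ _ hj).1
      rw [hL, sep_mem_inl_BBlocks, ncard_singleton] at this
      omega
    · exact mem_range_self j
  refine Prod.ext (eq_of_subset_of_ncard_le hP ?_) hL
  rw [hP₁]
  exact ((ncard_range_of_injective inr_injective).trans (Nat.card_fin n)).le

lemma IsSpecialDecomp.exists_Ablock_mem (hn : 3 ≤ n) (h : IsSpecialDecomp n φ S₁ S₂) :
    ∃ i, Ablock n i ∈ S₁.2 := by
  by_contra! hA
  exact h.2.2.2.1 (h.1.symm.eq_simplexA hn fun i => (h.1.mem_snd_snd_iff (.inl ⟨i, rfl⟩)).2 (hA i))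

lemma IsSpecialDecomp.exists_Bblock_mem (hn : 3 ≤ n) (h : IsSpecialDecomp n φ S₁ S₂) :
    ∃ k, Bblock n φ k ∈ S₁.2 := by
  by_contra! hB
  exact h.2.2.2.2 (h.1.symm.eq_simplexB hn fun k => (h.1.mem_snd_snd_iff (.inr ⟨k, rfl⟩)).2 (hB k))

lemma IsDecomp.of_Ablock_mem (h : IsDecomp n φ S₁ S₂) {i : Fin n} (hi : Ablock n i ∈ S₁.2) :
    (inl ⁻¹' S₂.1).ncard ≤ 2 ∧ ((inl ⁻¹' S₂.1).ncard = 2 → inl i ∈ S₂.1 ∧ inr i ∉ S₂.1) := by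
  obtain ⟨-, -, -, -, -, -, -, -, hl₁, -⟩ := h
  have := (hl₁ _ hi).2
  rw [ncard_Ablock_inter] at this
  exact ncard_le_two_of_ncard_inter_add_eq_one this

lemma IsDecomp.of_Bblock_mem (h : IsDecomp n φ S₁ S₂) {k : Fin n} (hk : Bblock n φ k ∈ S₁.2) :
    (inr ⁻¹' S₂.1).ncard ≤ 2 ∧ ((inr ⁻¹' S₂.1).ncard = 2 → inr k ∈ S₂.1 ∧ inl (φ k) ∉ S₂.1) := by
  obtain ⟨-, -, -, -, -, -, -, -, hl₁, -⟩ := h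
  have := (hl₁ _ hk).2
  rw [ncard_Bblock_inter] at this
  exact ncard_le_two_of_ncard_inter_add_eq_one this

lemma IsSpecialDecomp.ncard_preimage_le_two (hn : 3 ≤ n) (h : IsSpecialDecomp n φ S₁ S₂) :
    (inl ⁻¹' S₂.1).ncard ≤ 2 ∧ (inr ⁻¹' S₂.1).ncard ≤ 2 := by
  obtain ⟨i, hi⟩ := h.exists_Ablock_mem hn
  obtain ⟨k, hk⟩ := h.exists_Bblock_mem hn
  exact ⟨(h.1.of_Ablock_mem hi).1, (h.1.of_Bblock_mem hk).1⟩

lemma IsSpecialDecomp.eq_four (hn : 4 ≤ n) (h : IsSpecialDecomp n φ S₁ S₂) : n = 4 := by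
  have h₂ := h.ncard_preimage_le_two (by omega)
  have h₁ := h.symm.ncard_preimage_le_two (by omega)
  have := h.1.ncard_preimage_add inl
  omega

end Decomposition

section MixedSimplex

variable {n : ℕ} {φ : Equiv.Perm (Fin n)} {X : Set (Fin n)}

def mixedSimplex (φ : Equiv.Perm (Fin n)) (X : Set (Fin n)) : MSimplex n :=
  (inl '' X ∪ inr '' Xᶜ, Ablock n '' Xᶜ ∪ Bblock n φ '' X)

@[simp] lemma preimage_inl_mixedSimplex_fst : inl ⁻¹' (mixedSimplex φ X).1 = X := by
  ext; simp [mixedSimplex]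

@[simp] lemma preimage_inr_mixedSimplex_fst : inr ⁻¹' (mixedSimplex φ X).1 = Xᶜ := by
  ext; simp [mixedSimplex]

@[simp] lemma inl_mem_mixedSimplex_fst {j : Fin n} :
    (inl j : MPoint n) ∈ (mixedSimplex φ X).1 ↔ j ∈ X := by
  simp [mixedSimplex]

@[simp] lemma inr_mem_mixedSimplex_fst {j : Fin n} :
    (inr j : MPoint n) ∈ (mixedSimplex φ X).1 ↔ j ∉ X := by
  simp [mixedSimplex]

lemma Ablock_mem_mixedSimplex_snd (hn : 3 ≤ n) {i : Fin n} :
    Ablock n i ∈ (mixedSimplex φ X).2 ↔ i ∉ X := by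
  simp [mixedSimplex, Ablock_injective.eq_iff, Ne.symm (Ablock_ne_Bblock hn _ _)]

lemma Bblock_mem_mixedSimplex_snd (hn : 3 ≤ n) {k : Fin n} :
    Bblock n φ k ∈ (mixedSimplex φ X).2 ↔ k ∈ X := by
  simp [mixedSimplex, Bblock_injective.eq_iff, Ablock_ne_Bblock hn]

lemma mixedSimplex_snd_subset : (mixedSimplex φ X).2 ⊆ MBlocks n φ :=
  union_subset_union (image_subset_range _ _) (image_subset_range _ _)

lemma eq_of_subset_MBlocks {L L' : Set (Set (MPoint n))} (hL : L ⊆ MBlocks n φ)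
    (hL' : L' ⊆ MBlocks n φ) (hA : ∀ i, Ablock n i ∈ L ↔ Ablock n i ∈ L')
    (hB : ∀ k, Bblock n φ k ∈ L ↔ Bblock n φ k ∈ L') : L = L' := by
  ext l
  constructor
  · intro hl
    rcases hL hl with ⟨i, rfl⟩ | ⟨k, rfl⟩
    exacts [(hA i).1 hl, (hB k).1 hl]
  · intro hl
    rcases hL' hl with ⟨i, rfl⟩ | ⟨k, rfl⟩
    exacts [(hA i).2 hl, (hB k).2 hl]

lemma mixedSimplex_injective : Function.Injective (mixedSimplex φ) := fun X Y h => by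
  simpa using congrArg (inl ⁻¹' ·.1) h

end MixedSimplex

section FourPoints

variable {φ : Equiv.Perm (Fin 4)} {S₁ S₂ : MSimplex 4}

lemma IsSpecialDecomp.ncard_preimage_eq_two (h : IsSpecialDecomp 4 φ S₁ S₂) :
    (inl ⁻¹' S₂.1).ncard = 2 ∧ (inr ⁻¹' S₂.1).ncard = 2 := by
  have h₂ := h.ncard_preimage_le_two (by norm_num)
  have h₁ := h.symm.ncard_preimage_le_two (by norm_num)
  have := h.1.ncard_preimage_add inl
  have := h.1.ncard_preimage_add inr
  omega

lemma IsSpecialDecomp.Ablock_mem_fst_iff (h : IsSpecialDecomp 4 φ S₁ S₂) (i : Fin 4) :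
    (Ablock 4 i ∈ S₁.2 ↔ inl i ∉ S₁.1) ∧ (inr i ∈ S₁.1 ↔ inl i ∉ S₁.1) := by
  by_cases hi : Ablock 4 i ∈ S₁.2
  · have := (h.1.of_Ablock_mem hi).2 h.ncard_preimage_eq_two.1
    simp only [h.1.snd_fst_eq_compl, mem_compl_iff, not_not] at this
    tauto
  · have := (h.1.symm.of_Ablock_mem ((h.1.mem_snd_snd_iff (.inl ⟨i, rfl⟩)).2 hi)).2
      h.symm.ncard_preimage_eq_two.1
    tauto

lemma IsSpecialDecomp.Bblock_mem_fst_iff (h : IsSpecialDecomp 4 φ S₁ S₂) (k : Fin 4) :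
    (Bblock 4 φ k ∈ S₁.2 ↔ inr k ∉ S₁.1) ∧ (inl (φ k) ∈ S₁.1 ↔ inr k ∉ S₁.1) := by
  by_cases hk : Bblock 4 φ k ∈ S₁.2
  · have := (h.1.of_Bblock_mem hk).2 h.ncard_preimage_eq_two.2
    simp only [h.1.snd_fst_eq_compl, mem_compl_iff, not_not] at this
    tauto
  · have := (h.1.symm.of_Bblock_mem ((h.1.mem_snd_snd_iff (.inr ⟨k, rfl⟩)).2 hk)).2
      h.symm.ncard_preimage_eq_two.2
    tauto

lemma IsSpecialDecomp.fst_eq_mixedSimplex (h : IsSpecialDecomp 4 φ S₁ S₂) :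
    S₁ = mixedSimplex φ (inl ⁻¹' S₁.1) := by
  have hA := h.Ablock_mem_fst_iff
  have hB := h.Bblock_mem_fst_iff
  refine Prod.ext ?_ (eq_of_subset_MBlocks h.1.fst_snd_subset mixedSimplex_snd_subset
    (fun i => ?_) (fun k => ?_))
  · ext (j | j)
    · simp
    · simp [(hA j).2]
  · rw [Ablock_mem_mixedSimplex_snd (by norm_num), (hA i).1, mem_preimage]
  · rw [Bblock_mem_mixedSimplex_snd (by norm_num), (hB k).1, (hA k).2, not_not, mem_preimage]

lemma IsSpecialDecomp.apply_mem_iff (h : IsSpecialDecomp 4 φ S₁ S₂) (k : Fin 4) :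
    φ k ∈ inl ⁻¹' S₁.1 ↔ k ∈ inl ⁻¹' S₁.1 := by
  rw [mem_preimage, (h.Bblock_mem_fst_iff k).2, (h.Ablock_mem_fst_iff k).2, not_not, mem_preimage]

theorem IsSpecialDecomp.exists_eq_mixedSimplex (h : IsSpecialDecomp 4 φ S₁ S₂) :
    ∃ X : Set (Fin 4), X.ncard = 2 ∧ (∀ k, φ k ∈ X ↔ k ∈ X) ∧
      S₁ = mixedSimplex φ X ∧ S₂ = mixedSimplex φ Xᶜ := by
  refine ⟨_, h.symm.ncard_preimage_eq_two.1, h.apply_mem_iff, h.fst_eq_mixedSimplex, ?_⟩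
  rw [h.symm.fst_eq_mixedSimplex, h.1.snd_fst_eq_compl, preimage_compl]

end FourPoints

section MixedDecomposition

variable {n : ℕ} {φ : Equiv.Perm (Fin n)} {X : Set (Fin n)}

lemma mixedSimplex_compl_fst : (mixedSimplex φ Xᶜ).1 = (mixedSimplex φ X).1ᶜ := by
  ext (j | j) <;> simp

lemma ncard_mixedSimplex_fst : (mixedSimplex φ X).1.ncard = n := by
  rw [ncard_eq_ncard_preimage_inl_add, preimage_inl_mixedSimplex_fst,
    preimage_inr_mixedSimplex_fst, ncard_add_ncard_compl, Nat.card_fin]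

lemma ncard_mixedSimplex_snd (hn : 3 ≤ n) : (mixedSimplex φ X).2.ncard = n := by
  rw [mixedSimplex, ncard_image_Ablock_union_image_Bblock hn, add_comm, ncard_add_ncard_compl,
    Nat.card_fin]

lemma mixedSimplex_snd_union : (mixedSimplex φ X).2 ∪ (mixedSimplex φ Xᶜ).2 = MBlocks n φ := by
  rw [mixedSimplex, mixedSimplex, union_union_union_comm, ← image_union, ← image_union,
    compl_compl, compl_union_self, union_compl_self, image_univ, image_univ]
  rfl

lemma disjoint_mixedSimplex_snd (hn : 3 ≤ n) :
    Disjoint (mixedSimplex φ X).2 (mixedSimplex φ Xᶜ).2 := by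
  rw [disjoint_left]
  rintro _ (⟨i, hi, rfl⟩ | ⟨k, hk, rfl⟩)
  · rw [Ablock_mem_mixedSimplex_snd hn, not_not]
    exact hi
  · rw [Bblock_mem_mixedSimplex_snd hn]
    exact not_not_intro hk

lemma mixedSimplex_ne_simplexA (hX : Xᶜ.Nonempty) : mixedSimplex φ X ≠ SimplexA n := by
  obtain ⟨j, hj⟩ := hX
  intro h
  have : (inr j : MPoint n) ∈ (mixedSimplex φ X).1 := inr_mem_mixedSimplex_fst.2 hj
  simp [h, SimplexA] at this

lemma mixedSimplex_ne_simplexB (hX : X.Nonempty) : mixedSimplex φ X ≠ SimplexB n φ := by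
  obtain ⟨j, hj⟩ := hX
  intro h
  have : (inl j : MPoint n) ∈ (mixedSimplex φ X).1 := inl_mem_mixedSimplex_fst.2 hj
  simp [h, SimplexB] at this

end MixedDecomposition

section FourPoints

variable {φ : Equiv.Perm (Fin 4)} {X : Set (Fin 4)}

lemma ncard_compl_eq_two (hX : X.ncard = 2) : Xᶜ.ncard = 2 := by
  have := ncard_add_ncard_compl X
  rw [Nat.card_fin] at this
  omega

lemma ncard_inter_mixedSimplex (hX : X.ncard = 2) (hXc : Xᶜ.ncard = 2)
    (hφ : ∀ i, φ i ∈ X ↔ i ∈ X) {l : Set (MPoint 4)} (hl : l ∈ (mixedSimplex φ X).2) :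
    (l ∩ (mixedSimplex φ X).1).ncard = 3 ∧ (l ∩ (mixedSimplex φ Xᶜ).1).ncard = 1 := by
  classical
  rcases hl with ⟨i, hi, rfl⟩ | ⟨k, hk, rfl⟩
  · simp [ncard_Ablock_inter, ncard_compl_singleton_inter_eq_ite, show i ∉ X from hi, hX, hXc]
  · simp [ncard_Bblock_inter, ncard_compl_singleton_inter_eq_ite, hk, hφ, hX, hXc]

lemma ncard_sep_mem_mixedSimplex (hX : X.ncard = 2) (hXc : Xᶜ.ncard = 2)
    (hφ : ∀ i, φ i ∈ X ↔ i ∈ X) {p : MPoint 4} (hp : p ∈ (mixedSimplex φ X).1) :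
    {l ∈ (mixedSimplex φ X).2 | p ∈ l}.ncard = 3 ∧
      {l ∈ (mixedSimplex φ Xᶜ).2 | p ∈ l}.ncard = 1 := by
  classical
  have hφ' : ∀ j, φ.symm j ∈ X ↔ j ∈ X := fun j => by simpa using (hφ (φ.symm j)).symm
  rcases p with j | j
  · rw [inl_mem_mixedSimplex_fst] at hp
    rw [mixedSimplex, mixedSimplex, ncard_sep_mem_inl (by norm_num),
      ncard_sep_mem_inl (by norm_num)]
    simp [ncard_compl_singleton_inter_eq_ite, hp, hφ', hX, hXc]
  · rw [inr_mem_mixedSimplex_fst] at hp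
    rw [mixedSimplex, mixedSimplex, ncard_sep_mem_inr (by norm_num),
      ncard_sep_mem_inr (by norm_num)]
    simp [ncard_compl_singleton_inter_eq_ite, hp, hX, hXc]

theorem isSpecialDecomp_mixedSimplex (hX : X.ncard = 2) (hφ : ∀ i, φ i ∈ X ↔ i ∈ X) :
    IsSpecialDecomp 4 φ (mixedSimplex φ X) (mixedSimplex φ Xᶜ) := by
  have hXc := ncard_compl_eq_two hX
  have hφc : ∀ i, φ i ∈ Xᶜ ↔ i ∈ Xᶜ := fun i => (hφ i).not
  have hn : 3 ≤ 4 := by norm_num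
  refine ⟨⟨?_, ?_, ncard_mixedSimplex_fst, ncard_mixedSimplex_fst, mixedSimplex_snd_union,
      disjoint_mixedSimplex_snd hn, ncard_mixedSimplex_snd hn, ncard_mixedSimplex_snd hn,
      fun l hl => ncard_inter_mixedSimplex hX hXc hφ hl, fun l hl => ?_,
      fun p hp => ncard_sep_mem_mixedSimplex hX hXc hφ hp, fun p hp => ?_⟩,
    mixedSimplex_ne_simplexA (nonempty_of_ncard_ne_zero (by omega)),
    mixedSimplex_ne_simplexB (nonempty_of_ncard_ne_zero (by omega)),
    mixedSimplex_ne_simplexA (nonempty_of_ncard_ne_zero (by rw [compl_compl]; omega)),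
    mixedSimplex_ne_simplexB (nonempty_of_ncard_ne_zero (by omega))⟩
  · rw [mixedSimplex_compl_fst, union_compl_self]
  · rw [mixedSimplex_compl_fst]
    exact disjoint_compl_right
  · simpa only [compl_compl] using ncard_inter_mixedSimplex hXc (by rwa [compl_compl]) hφc hl
  · simpa only [compl_compl] using ncard_sep_mem_mixedSimplex hXc (by rwa [compl_compl]) hφc hp

end FourPoints

def specialDecompositions (n : ℕ) (φ : Equiv.Perm (Fin n)) : Set (Set (MSimplex n)) :=
  {D | ∃ S₁ S₂ : MSimplex n, IsSpecialDecomp n φ S₁ S₂ ∧ D = {S₁, S₂}}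

-- A `φ`-invariant splitting of `Fin 4` into two pairs, represented by the pair containing `0`.
def invariantPairs (φ : Equiv.Perm (Fin 4)) : Finset (Finset (Fin 4)) :=
  {X | X.card = 2 ∧ 0 ∈ X ∧ ∀ i, φ i ∈ X ↔ i ∈ X}

def mixedDecomposition (φ : Equiv.Perm (Fin 4)) (X : Finset (Fin 4)) : Set (MSimplex 4) :=
  {mixedSimplex φ ↑X, mixedSimplex φ (↑X)ᶜ}

section Counting

variable (φ : Equiv.Perm (Fin 4))

lemma toFinset_mem_invariantPairs {X : Set (Fin 4)} (hX : X.ncard = 2) (h0 : 0 ∈ X)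
    (hφ : ∀ k, φ k ∈ X ↔ k ∈ X) : (toFinite X).toFinset ∈ invariantPairs φ := by
  rw [invariantPairs, Finset.mem_filter, ← ncard_eq_toFinset_card, Finite.mem_toFinset]
  exact ⟨Finset.mem_univ _, hX, h0, by simpa using hφ⟩

lemma pair_mem_image_mixedDecomposition {X : Set (Fin 4)} (hX : X.ncard = 2)
    (hφ : ∀ k, φ k ∈ X ↔ k ∈ X) :
    {mixedSimplex φ X, mixedSimplex φ Xᶜ} ∈ mixedDecomposition φ '' ↑(invariantPairs φ) := by
  by_cases h0 : 0 ∈ X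
  · exact ⟨_, toFinset_mem_invariantPairs φ hX h0 hφ, by simp [mixedDecomposition]⟩
  · refine ⟨_, toFinset_mem_invariantPairs φ (ncard_compl_eq_two hX) h0 fun k => (hφ k).not, ?_⟩
    simp [mixedDecomposition, pair_comm]

lemma specialDecompositions_eq_image :
    specialDecompositions 4 φ = mixedDecomposition φ '' ↑(invariantPairs φ) := by
  ext D
  constructor
  · rintro ⟨S₁, S₂, h, rfl⟩
    obtain ⟨X, hX, hφ, rfl, rfl⟩ := h.exists_eq_mixedSimplex
    exact pair_mem_image_mixedDecomposition φ hX hφ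
  · rintro ⟨X, hX, rfl⟩
    rw [Finset.mem_coe, invariantPairs, Finset.mem_filter] at hX
    exact ⟨_, _, isSpecialDecomp_mixedSimplex (by rw [ncard_coe_finset, hX.2.1]) hX.2.2.2, rfl⟩

lemma injOn_mixedDecomposition : InjOn (mixedDecomposition φ) ↑(invariantPairs φ) := by
  intro X hX Y hY h
  rw [Finset.mem_coe, invariantPairs, Finset.mem_filter] at hX hY
  have : mixedSimplex φ ↑X ∈ mixedDecomposition φ Y := h ▸ mem_insert _ _
  rcases this with h | h
  · exact Finset.coe_inj.1 (mixedSimplex_injective h)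
  · have := congrArg (0 ∈ ·) (mixedSimplex_injective (mem_singleton_iff.1 h))
    simp [hX.2.2.1, hY.2.2.1] at this

lemma ncard_specialDecompositions :
    (specialDecompositions 4 φ).ncard = (invariantPairs φ).card := by
  rw [specialDecompositions_eq_image, (injOn_mixedDecomposition φ).ncard_image, ncard_coe_finset]

lemma exists_isSpecialDecomp_iff :
    (∃ S₁ S₂ : MSimplex 4, IsSpecialDecomp 4 φ S₁ S₂) ↔ (invariantPairs φ).Nonempty := by
  rw [← Finset.coe_nonempty, ← image_nonempty (f := mixedDecomposition φ),
    ← specialDecompositions_eq_image]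
  exact ⟨fun ⟨S₁, S₂, h⟩ => ⟨_, S₁, S₂, h, rfl⟩, fun ⟨_, S₁, S₂, h, _⟩ => ⟨S₁, S₂, h⟩⟩

lemma invariantPairs_nonempty_iff :
    (invariantPairs φ).Nonempty ↔
      φ.cycleType = 0 ∨ φ.cycleType = {2, 2} ∨ φ.cycleType = {2} := by
  revert φ
  decide

end Counting

/-- 𝔐_{(n,φ)} admits a special decomposition iff n = 4 and φ is conjugate in S₄ to id,
to (12)(34) or to (12) (equivalently, its cycle type is 0, {2,2} or {2}); moreover,
counting unordered pairs of simplices, 𝔐_{(4,id)} has exactly 3 special decompositions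
while 𝔐_{(4,(13)(24))} and 𝔐_{(4,(12))} have exactly one each. -/
theorem stmt8 (n : ℕ) (hn : 4 ≤ n) (φ : Equiv.Perm (Fin n)) :
    ((∃ S₁ S₂ : MSimplex n, IsSpecialDecomp n φ S₁ S₂) ↔
      (n = 4 ∧ (φ.cycleType = 0 ∨ φ.cycleType = {2, 2} ∨ φ.cycleType = {2}))) ∧
    {D : Set (MSimplex 4) |
      ∃ S₁ S₂ : MSimplex 4, IsSpecialDecomp 4 1 S₁ S₂ ∧ D = {S₁, S₂}}.ncard = 3 ∧
    {D : Set (MSimplex 4) |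
      ∃ S₁ S₂ : MSimplex 4,
        IsSpecialDecomp 4 (Equiv.swap (0 : Fin 4) 2 * Equiv.swap (1 : Fin 4) 3) S₁ S₂ ∧
        D = {S₁, S₂}}.ncard = 1 ∧
    {D : Set (MSimplex 4) |
      ∃ S₁ S₂ : MSimplex 4,
        IsSpecialDecomp 4 (Equiv.swap (0 : Fin 4) 1) S₁ S₂ ∧ D = {S₁, S₂}}.ncard = 1 := by
  refine ⟨⟨fun ⟨S₁, S₂, h⟩ => ?_, ?_⟩, (ncard_specialDecompositions _).trans (by decide),
    (ncard_specialDecompositions _).trans (by decide),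
    (ncard_specialDecompositions _).trans (by decide)⟩
  · obtain rfl := h.eq_four hn
    exact ⟨rfl, (invariantPairs_nonempty_iff φ).1 ((exists_isSpecialDecomp_iff φ).1 ⟨S₁, S₂, h⟩)⟩
  · rintro ⟨rfl, hφ⟩
    exact (exists_isSpecialDecomp_iff φ).2 ((invariantPairs_nonempty_iff φ).2 hφ)
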